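/- Let L ⊆ Σ* be a language and B ⊆ Σ* be a language containing the empty word such that Π(L ∩ B) = Π(L), and suppose Π(L) is a semilinear set that is a finite union of linear sets with constants c₁,…,c_ℓ, where uᵢ ∈ L satisfies Π(uᵢ) = cᵢ for each i. Then the language B' = u₁*⋯u_ℓ* B^ℓ satisfies Π(Lᵗ ∩ B') = Π(Lᵗ) for every natural number t. -/

import Mathlib

open Computability

/-- The Parikh image of a word: counts occurrences of each letter. -/
def parikh {α : Type*} [DecidableEq α] (w : List α) : α → ℕ := fun a => w.count a

/-- The Parikh image of a language. -/
def pim {α : Type*} [DecidableEq α] (L : Language α) : Set (α → ℕ) :=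
  parikh '' (L : Set (List α))

section Aux

variable {α : Type*} [DecidableEq α]

lemma parikh_nil : parikh ([] : List α) = 0 := by
  funext a; simp [parikh]

lemma parikh_append (x y : List α) : parikh (x ++ y) = parikh x + parikh y := by
  funext a; simp [parikh, List.count_append]

lemma parikh_flatten_ofFn {m : ℕ} (g : Fin m → List α) :
    parikh (List.ofFn g).flatten = ∑ i, parikh (g i) := by
  induction m with
  | zero => simp [parikh_nil]
  | succ n ih =>
    rw [List.ofFn_succ, List.flatten_cons, parikh_append, Fin.sum_univ_succ, ih]

lemma parikh_replicate_flatten (a : ℕ) (s : List α) :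
    parikh (List.replicate a s).flatten = a • parikh s := by
  induction a with
  | zero => simp [parikh_nil]
  | succ n ih =>
    rw [List.replicate_succ, List.flatten_cons, parikh_append, ih, succ_nsmul, add_comm]

set_option linter.unusedSectionVars false in
lemma mem_prod_ofFn : ∀ {m : ℕ} (A : Fin m → Language α) (c : Fin m → List α),
    (∀ i, c i ∈ A i) → (List.ofFn c).flatten ∈ (List.ofFn A).prod
  | 0, A, c, h => by simp [Language.mem_one]
  | m + 1, A, c, h => by
    rw [List.ofFn_succ (f := c), List.ofFn_succ (f := A), List.flatten_cons, List.prod_cons]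
    exact Language.append_mem_mul (h 0) (mem_prod_ofFn _ _ fun i => h i.succ)

end Aux

/-- If Π(L ⊓ B) = Π(L), ε ∈ B, and Π(L) is semilinear with constants
c₁,…,c_ℓ realized by words u₁,…,u_ℓ ∈ L, then B' = u₁*⋯u_ℓ* B^ℓ
satisfies Π(Lᵗ ⊓ B') = Π(Lᵗ) for every t. -/
theorem parikh_power_bounded {α : Type*} [DecidableEq α]
    (L B : Language α)
    (hε : [] ∈ B)
    (hLB : pim (L ⊓ B) = pim L)
    (ℓ : ℕ)
    (u : Fin ℓ → List α)
    (hu : ∀ i, u i ∈ L)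
    (k : Fin ℓ → ℕ)
    (per : (i : Fin ℓ) → Fin (k i) → (α → ℕ))
    (hsemi : pim L =
      ⋃ i : Fin ℓ, {v | ∃ lam : Fin (k i) → ℕ,
        v = parikh (u i) + ∑ j, lam j • per i j}) :
    ∀ t : ℕ,
      pim (L ^ t ⊓ ((List.ofFn fun i => (({u i} : Language α))∗).prod * B ^ ℓ)) =
        pim (L ^ t) := by
  classical
  intro t
  apply Set.Subset.antisymm
  · exact Set.image_mono (fun x hx => hx.1)
  rintro v ⟨w, hw, rfl⟩
  replace hw := Language.mem_pow.mp hw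
  obtain ⟨S, rfl, hlen, hmemS⟩ := hw
  -- choose linear set index and coefficients for each factor
  have hch : ∀ j : Fin S.length, ∃ i : Fin ℓ, ∃ lam : Fin (k i) → ℕ,
      parikh (S.get j) = parikh (u i) + ∑ m, lam m • per i m := by
    intro j
    have hmem : parikh (S.get j) ∈ pim L :=
      ⟨S.get j, hmemS _ (List.get_mem S j), rfl⟩
    rw [hsemi] at hmem
    simpa using hmem
  choose f lam hflam using hch
  obtain ⟨fib, hfib⟩ : ∃ fib : Fin ℓ → Finset (Fin S.length),
      ∀ i, fib i = Finset.univ.filter (fun j => f j = i) := ⟨_, fun _ => rfl⟩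
  obtain ⟨n, hn⟩ : ∃ n : Fin ℓ → ℕ, ∀ i, n i = (fib i).card := ⟨_, fun _ => rfl⟩
  obtain ⟨q, hq⟩ : ∃ q : Fin S.length → (α → ℕ),
      ∀ j, q j = ∑ m, lam j m • per (f j) m := ⟨_, fun _ => rfl⟩
  obtain ⟨P, hP⟩ : ∃ P : Fin ℓ → (α → ℕ), ∀ i, P i = ∑ j ∈ fib i, q j :=
    ⟨_, fun _ => rfl⟩
  have hmemfib : ∀ i, ∀ j ∈ fib i, f j = i := by
    intro i j hj
    rw [hfib] at hj
    exact (Finset.mem_filter.mp hj).2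
  -- P i is a nonnegative combination of the periods of linear set i
  have hPcomb : ∀ i : Fin ℓ, ∃ g : Fin (k i) → ℕ, P i = ∑ m, g m • per i m := by
    intro i
    have key : ∀ j ∈ fib i, ∃ g : Fin (k i) → ℕ, q j = ∑ m, g m • per i m := by
      intro j hj
      have hfj : f j = i := hmemfib i j hj
      subst hfj
      exact ⟨lam j, hq j⟩
    choose g hg using key
    refine ⟨fun m => ∑ j ∈ (fib i).attach, g j.1 j.2 m, ?_⟩
    rw [hP, ← Finset.sum_attach (fib i) q]
    calc ∑ x ∈ (fib i).attach, q x.1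
        = ∑ x ∈ (fib i).attach, ∑ m, g x.1 x.2 m • per i m :=
          Finset.sum_congr rfl fun x _ => hg x.1 x.2
      _ = ∑ m, ∑ x ∈ (fib i).attach, g x.1 x.2 m • per i m := Finset.sum_comm
      _ = ∑ m, (∑ x ∈ (fib i).attach, g x.1 x.2 m) • per i m :=
          Finset.sum_congr rfl fun m _ => (Finset.sum_smul).symm
  -- choose the B-words
  have hzex : ∀ i : Fin ℓ, ∃ z : List α,
      (0 < n i → z ∈ L) ∧ z ∈ B ∧ (¬ 0 < n i → z = []) ∧
      (parikh z = (if 0 < n i then parikh (u i) + P i else 0)) := by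
    intro i
    by_cases h : 0 < n i
    · have hv : parikh (u i) + P i ∈ pim (L ⊓ B) := by
        rw [hLB, hsemi]
        obtain ⟨g, hg⟩ := hPcomb i
        exact Set.mem_iUnion.mpr ⟨i, ⟨g, by rw [hg]⟩⟩
      obtain ⟨zz, hz1, hz2⟩ := hv
      exact ⟨zz, fun _ => hz1.1, hz1.2, fun h' => absurd h h', by simp [h, hz2]⟩
    · exact ⟨[], fun h' => absurd h' h, hε, fun _ => rfl, by simp [h, parikh_nil]⟩
  choose z hzL hzB hznil hzp using hzex
  -- if the fiber is empty then P i = 0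
  have hP0 : ∀ i, ¬ 0 < n i → P i = 0 := by
    intro i h
    have h0 : fib i = ∅ := by
      apply Finset.card_eq_zero.mp
      rw [← hn]; omega
    rw [hP, h0]; simp
  obtain ⟨a, haa⟩ : ∃ a : Fin ℓ → ℕ, ∀ i, a i = n i - 1 := ⟨_, fun _ => rfl⟩
  refine ⟨(List.ofFn fun i => (List.replicate (a i) (u i)).flatten).flatten ++
      (List.ofFn z).flatten, ⟨?_, ?_⟩, ?_⟩
  · -- membership in L ^ t
    refine Language.mem_pow.mpr ?_
    refine ⟨(List.ofFn fun i => List.replicate (a i) (u i)).flatten ++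
        (List.ofFn fun i => if 0 < n i then [z i] else []).flatten, ?_, ?_, ?_⟩
    · rw [List.flatten_append, List.flatten_flatten, List.flatten_flatten,
        List.map_ofFn, List.map_ofFn]
      have e2 : (List.flatten ∘ fun i => if 0 < n i then [z i] else []) = z := by
        funext i
        by_cases h : 0 < n i
        · simp [Function.comp, h]
        · simp [Function.comp, h, hznil i h]
      rw [e2]
      rfl
    · rw [List.length_append, List.length_flatten, List.length_flatten,
        List.map_ofFn, List.map_ofFn, List.sum_ofFn, List.sum_ofFn,
        ← Finset.sum_add_distrib]
      simp only [Function.comp]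
      have heach : ∀ i : Fin ℓ, (List.replicate (a i) (u i)).length +
          (if 0 < n i then [z i] else []).length = n i := by
        intro i
        by_cases h : 0 < n i
        · rw [if_pos h]
          simp only [List.length_replicate, List.length_cons, List.length_nil, haa i]
          omega
        · rw [if_neg h]
          simp only [List.length_replicate, List.length_nil, haa i]
          omega
      rw [Finset.sum_congr rfl fun i _ => heach i]
      have hcard := Finset.card_eq_sum_card_fiberwise
        (f := f) (s := Finset.univ) (t := Finset.univ)
        (fun x _ => Finset.mem_univ _)
      rw [Finset.card_univ, Fintype.card_fin] at hcard
      have hsum : ∑ i, n i = ∑ i, (Finset.univ.filter (fun j => f j = i)).card :=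
        Finset.sum_congr rfl fun i _ => by rw [hn i, hfib i]
      have hfin : Finset.univ.sum n = S.length := hsum.trans hcard.symm
      rw [hlen] at hfin
      exact hfin
    · intro y hy
      rw [List.mem_append] at hy
      rcases hy with hy | hy
      · rw [List.mem_flatten] at hy
        obtain ⟨l, hl, hyl⟩ := hy
        rw [List.mem_ofFn] at hl
        obtain ⟨i, rfl⟩ := hl
        rw [List.eq_of_mem_replicate hyl]
        exact hu i
      · rw [List.mem_flatten] at hy
        obtain ⟨l, hl, hyl⟩ := hy
        rw [List.mem_ofFn] at hl
        obtain ⟨i, rfl⟩ := hl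
        have hyl' : y ∈ (if 0 < n i then [z i] else []) := hyl
        by_cases h : 0 < n i
        · rw [if_pos h] at hyl'
          rw [List.mem_singleton.mp hyl']
          exact hzL i h
        · rw [if_neg h] at hyl'
          exact absurd hyl' List.not_mem_nil
  · -- membership in B'
    apply Language.append_mem_mul
    · apply mem_prod_ofFn
      intro i
      exact Language.join_mem_kstar fun y hy => List.eq_of_mem_replicate hy
    · rw [Language.mem_pow]
      refine ⟨List.ofFn z, rfl, by simp, ?_⟩
      intro y hy
      rw [List.mem_ofFn] at hy
      obtain ⟨i, rfl⟩ := hy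
      exact hzB i
  · -- Parikh images agree
    conv_rhs => rw [← List.ofFn_get S]
    rw [parikh_append, parikh_flatten_ofFn, parikh_flatten_ofFn, parikh_flatten_ofFn,
      ← Finset.sum_add_distrib,
      ← Finset.sum_fiberwise Finset.univ f (fun j => parikh (S.get j))]
    apply Finset.sum_congr rfl
    intro i _
    have hfibsum : ∑ j ∈ Finset.univ.filter (fun j => f j = i), parikh (S.get j)
        = n i • parikh (u i) + P i := by
      rw [← hfib i]
      calc ∑ j ∈ fib i, parikh (S.get j)
          = ∑ j ∈ fib i, (parikh (u i) + q j) := by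
            refine Finset.sum_congr rfl fun j hj => ?_
            rw [hflam j, ← hq j, hmemfib i j hj]
        _ = ∑ _j ∈ fib i, parikh (u i) + ∑ j ∈ fib i, q j := Finset.sum_add_distrib
        _ = n i • parikh (u i) + P i := by rw [Finset.sum_const, hn i, hP i]
    rw [hfibsum, parikh_replicate_flatten, hzp i]
    by_cases h : 0 < n i
    · rw [if_pos h, haa i, ← add_assoc, ← succ_nsmul, Nat.sub_add_cancel h]
    · rw [if_neg h, hP0 i h]
      have h0 : n i = 0 := Nat.eq_zero_of_not_pos h
      simp [haa i, h0]
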